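/- Let r ≥ 1, let S₁, S₂, G : U → GL_r(ℂ) be differentiable maps on an open set U ⊆ ℝ² with coordinates (u₁, u₂), and let K₀ and K_∞ be constant diagonal complex matrices such that G⁻¹·e^{2πiK₀}·S₂⁻¹·S₁⁻¹·G = e^{−2πiK_∞} holds identically on U. Then, pointwise on U: Tr( δS₁·S₁⁻¹ ∧ δG·G⁻¹ ) + Tr( δS₂·S₂⁻¹ ∧ δ(S₁⁻¹G)·G⁻¹S₁ ) = Tr( (δS₁·S₁⁻¹ + e^{2πiK₀}·S₂⁻¹δS₂·e^{−2πiK₀}) ∧ δG·G⁻¹ ). (This is the computation (b4)–(b6) of the paper, which identifies the symplectic structure on the Stokes data of a rational connection with one irregular singularity of order 2 and one regular singularity with the symplectic structure of the Poisson–Lie group G* dual to GL_r.) -/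

import Mathlib

/-- Partial derivative in the first parameter `u₁` of a matrix-valued map on `ℝ²`,
computed entrywise. -/
noncomputable def mpd1 {r : ℕ} (X : ℝ × ℝ → Matrix (Fin r) (Fin r) ℂ) (u : ℝ × ℝ) :
    Matrix (Fin r) (Fin r) ℂ :=
  Matrix.of fun i j => deriv (fun s => X (s, u.2) i j) u.1

/-- Partial derivative in the second parameter `u₂` of a matrix-valued map on `ℝ²`,
computed entrywise. -/
noncomputable def mpd2 {r : ℕ} (X : ℝ × ℝ → Matrix (Fin r) (Fin r) ℂ) (u : ℝ × ℝ) :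
    Matrix (Fin r) (Fin r) ℂ :=
  Matrix.of fun i j => deriv (fun s => X (u.1, s) i j) u.2

/-- The scalar `Tr(α ∧ β) = Tr(α₁β₂ − α₂β₁)` for matrix-valued 1-forms
`α = (α₁, α₂)`, `β = (β₁, β₂)` on `ℝ²`. -/
noncomputable def wedgeTr {r : ℕ} (α₁ α₂ β₁ β₂ : Matrix (Fin r) (Fin r) ℂ) : ℂ :=
  (α₁ * β₂ - α₂ * β₁).trace

namespace Stmt14Aux
open Matrix

variable {r : ℕ}

/-- Entrywise derivative of a one-variable matrix function. -/
noncomputable def md (f : ℝ → Matrix (Fin r) (Fin r) ℂ) (t : ℝ) : Matrix (Fin r) (Fin r) ℂ :=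
  Matrix.of fun i j => deriv (fun s => f s i j) t

/-- Entrywise differentiability at a point. -/
def Dif (f : ℝ → Matrix (Fin r) (Fin r) ℂ) (t : ℝ) : Prop :=
  ∀ i j, DifferentiableAt ℝ (fun s => f s i j) t

lemma Dif.const (A : Matrix (Fin r) (Fin r) ℂ) (t : ℝ) : Dif (fun _ => A) t :=
  fun _ _ => differentiableAt_const _

lemma Dif.mul {f g : ℝ → Matrix (Fin r) (Fin r) ℂ} {t : ℝ} (hf : Dif f t) (hg : Dif g t) :
    Dif (fun s => f s * g s) t := by
  intro i j
  have h : (fun s => (f s * g s) i j) = fun s => ∑ k, f s i k * g s k j := by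
    funext s; simp [Matrix.mul_apply]
  rw [h]
  exact DifferentiableAt.fun_sum fun k _ => (hf i k).mul (hg k j)

lemma md_const (A : Matrix (Fin r) (Fin r) ℂ) (t : ℝ) : md (fun _ => A) t = 0 := by
  ext i j
  simp [md]

lemma md_congr {f g : ℝ → Matrix (Fin r) (Fin r) ℂ} {t : ℝ} (h : ∀ᶠ s in nhds t, f s = g s) :
    md f t = md g t := by
  ext i j
  exact Filter.EventuallyEq.deriv_eq (by filter_upwards [h] with s hs; rw [hs])

lemma md_mul {f g : ℝ → Matrix (Fin r) (Fin r) ℂ} {t : ℝ} (hf : Dif f t) (hg : Dif g t) :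
    md (fun s => f s * g s) t = md f t * g t + f t * md g t := by
  ext i j
  have h : (fun s => (f s * g s) i j) = fun s => ∑ k, f s i k * g s k j := by
    funext s; simp [Matrix.mul_apply]
  simp only [md, Matrix.of_apply, Matrix.add_apply, Matrix.mul_apply, h]
  rw [deriv_fun_sum fun k _ => ((hf i k).fun_mul (hg k j))]
  rw [← Finset.sum_add_distrib]
  exact Finset.sum_congr rfl fun k _ => deriv_mul (hf i k) (hg k j)

lemma Dif.det {f : ℝ → Matrix (Fin r) (Fin r) ℂ} {t : ℝ} (hf : Dif f t) :
    DifferentiableAt ℝ (fun s => (f s).det) t := by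
  have h : (fun s => (f s).det)
      = fun s => ∑ σ : Equiv.Perm (Fin r),
          ((Equiv.Perm.sign σ : ℤ) : ℂ) * ∏ i, f s (σ i) i := by
    funext s; rw [Matrix.det_apply]; simp [Units.smul_def, zsmul_eq_mul]
  rw [h]
  exact DifferentiableAt.fun_sum fun σ _ =>
    (differentiableAt_const _).mul (DifferentiableAt.fun_finsetProd fun i _ => hf (σ i) i)

lemma Dif.adjugate {f : ℝ → Matrix (Fin r) (Fin r) ℂ} {t : ℝ} (hf : Dif f t) :
    Dif (fun s => (f s).adjugate) t := by
  intro i j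
  have h : (fun s => (f s).adjugate i j)
      = fun s => ((f s).updateRow j (Pi.single i 1)).det := by
    funext s; rw [Matrix.adjugate_apply]
  rw [h]
  apply Dif.det
  intro i' j'
  by_cases hij : i' = j
  · simp [Matrix.updateRow_apply, hij]
  · simp only [Matrix.updateRow_apply, hij, if_false]
    exact hf i' j'

lemma Dif.inv {f : ℝ → Matrix (Fin r) (Fin r) ℂ} {t : ℝ} (hf : Dif f t)
    (h : IsUnit (f t)) : Dif (fun s => (f s)⁻¹) t := by
  intro i j
  have hform : (fun s => (f s)⁻¹ i j) = fun s => ((f s).det)⁻¹ * (f s).adjugate i j := by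
    funext s
    rw [Matrix.inv_def, Matrix.smul_apply, Ring.inverse_eq_inv', smul_eq_mul]
  rw [hform]
  have hdet : (f t).det ≠ 0 := by
    have := (Matrix.isUnit_iff_isUnit_det (f t)).mp h
    exact IsUnit.ne_zero this
  exact ((hf.det).inv hdet).mul (hf.adjugate i j)

lemma md_inv {f : ℝ → Matrix (Fin r) (Fin r) ℂ} {t : ℝ} (hf : Dif f t)
    (h : ∀ᶠ s in nhds t, IsUnit (f s)) :
    md (fun s => (f s)⁻¹) t = -((f t)⁻¹ * (md f t * (f t)⁻¹)) := by
  have ht : IsUnit (f t) := h.self_of_nhds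
  have hdi : Dif (fun s => (f s)⁻¹) t := hf.inv ht
  have h1 : md (fun s => f s * (f s)⁻¹) t = 0 := by
    rw [md_congr (g := fun _ => (1 : Matrix (Fin r) (Fin r) ℂ))
      (by filter_upwards [h] with s hs;
          exact Matrix.mul_nonsing_inv _ ((Matrix.isUnit_iff_isUnit_det _).mp hs))]
    exact md_const _ _
  have h2 := md_mul hf hdi
  rw [h1] at h2
  have hinv : (f t)⁻¹ * f t = 1 :=
    Matrix.nonsing_inv_mul _ ((Matrix.isUnit_iff_isUnit_det _).mp ht)
  have h4 : f t * md (fun s => (f s)⁻¹) t = -(md f t * (f t)⁻¹) :=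
    eq_neg_of_add_eq_zero_right h2.symm
  calc md (fun s => (f s)⁻¹) t = (f t)⁻¹ * (f t * md (fun s => (f s)⁻¹) t) := by
        rw [← mul_assoc, hinv, one_mul]
    _ = (f t)⁻¹ * -(md f t * (f t)⁻¹) := by rw [h4]
    _ = -((f t)⁻¹ * (md f t * (f t)⁻¹)) := by rw [mul_neg]
  
end Stmt14Aux

namespace Stmt14Aux
open Matrix

variable {r : ℕ}

/-- Pure noncommutative-ring computation solving the differentiated monodromy
relation for `δ(S₁⁻¹G)·(G⁻¹S₁)`. -/
lemma alg {M : Type*} [Ring M] (a ai b bi g gi e e' d n m₂ q P : M)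
    (haa : a * ai = 1) (haa' : ai * a = 1) (hbb : b * bi = 1) (hbb' : bi * b = 1)
    (hgg : g * gi = 1) (hgg' : gi * g = 1) (hee : e * e' = 1) (hee' : e' * e = 1)
    (hq : q = -(bi * (m₂ * bi)))
    (hdiff : e * (q * (ai * g) + bi * P) = n * d)
    (hrelt : e * (bi * (ai * g)) = g * d) :
    P * (gi * a) = m₂ * bi + b * (e' * (n * gi * (e * bi))) := by
  have ca : ∀ x : M, a * (ai * x) = x := fun x => by rw [← mul_assoc, haa, one_mul]
  have cai : ∀ x : M, ai * (a * x) = x := fun x => by rw [← mul_assoc, haa', one_mul]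
  have cb : ∀ x : M, b * (bi * x) = x := fun x => by rw [← mul_assoc, hbb, one_mul]
  have cbi : ∀ x : M, bi * (b * x) = x := fun x => by rw [← mul_assoc, hbb', one_mul]
  have cg : ∀ x : M, g * (gi * x) = x := fun x => by rw [← mul_assoc, hgg, one_mul]
  have cgi : ∀ x : M, gi * (g * x) = x := fun x => by rw [← mul_assoc, hgg', one_mul]
  have ce : ∀ x : M, e * (e' * x) = x := fun x => by rw [← mul_assoc, hee, one_mul]
  have ce' : ∀ x : M, e' * (e * x) = x := fun x => by rw [← mul_assoc, hee', one_mul]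
  -- d * gi = gi * (e * (bi * ai))
  have hdg : d * gi = gi * (e * (bi * ai)) := by
    have h := congrArg (fun x => gi * (x * gi)) hrelt
    simp only [mul_assoc, cg] at h
    -- h : gi * (e * (bi * (ai * (g * gi)))) = gi * (g * (d * gi)) after assoc? iterate
    simp only [hgg, mul_one, cgi] at h
    exact h.symm
  have hdg' : ∀ x : M, d * (gi * x) = gi * (e * (bi * (ai * x))) := fun x => by
    rw [← mul_assoc, hdg]; simp only [mul_assoc]
  -- solve hdiff for P
  have h1 : q * (ai * g) + bi * P = e' * (n * d) := by
    have h := congrArg (fun x => e' * x) hdiff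
    simpa only [ce'] using h
  have h2 : bi * P = e' * (n * d) - q * (ai * g) := eq_sub_of_add_eq' h1
  have h3 : P = b * (e' * (n * d)) - b * (q * (ai * g)) := by
    calc P = b * (bi * P) := (cb P).symm
      _ = b * (e' * (n * d) - q * (ai * g)) := by rw [h2]
      _ = _ := by rw [mul_sub]
  rw [h3, hq]
  simp only [add_mul, sub_mul, neg_mul, mul_neg, sub_eq_add_neg, neg_neg, mul_assoc, hdg',
    ca, cai, cb, cbi, cg, cgi, ce, ce', haa, haa', hbb, hbb', hgg, hgg', hee, hee',
    mul_one, one_mul]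
  abel

/-- The trace identity finishing the computation. -/
lemma tr_key (b bi e e' m1 m2 t1 t2 : Matrix (Fin r) (Fin r) ℂ)
    (hbb : b * bi = 1) (hbb' : bi * b = 1) :
    ((m1 * bi) * (m2 * bi + b * (e' * (t2 * (e * bi))))
      - (m2 * bi) * (m1 * bi + b * (e' * (t1 * (e * bi))))).trace
    = ((e * (bi * m1) * e') * t2 - (e * (bi * m2) * e') * t1).trace := by
  have cb : ∀ x : Matrix (Fin r) (Fin r) ℂ, bi * (b * x) = x := fun x => by
    rw [← mul_assoc, hbb', one_mul]
  have key : ∀ m t : Matrix (Fin r) (Fin r) ℂ,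
      ((m * bi) * (b * (e' * (t * (e * bi))))).trace = ((e * (bi * m) * e') * t).trace := by
    intro m t
    have h1 : (m * bi) * (b * (e' * (t * (e * bi)))) = (m * e' * t) * (e * bi) := by
      simp only [mul_assoc, cb]
    rw [h1, Matrix.trace_mul_comm]
    congr 1
    simp only [mul_assoc]
  simp only [mul_add, Matrix.trace_sub, Matrix.trace_add, key]
  rw [Matrix.trace_mul_comm (m1 * bi) (m2 * bi)]
  ring

end Stmt14Aux

namespace Stmt14Aux
open Matrix

variable {r : ℕ}

/-- Differentiating the monodromy relation `E·S₂⁻¹·S₁⁻¹·G = G·D` along a line yields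
the formula `δ(S₁⁻¹G)·(G⁻¹S₁) = δS₂·S₂⁻¹ + S₂·E⁻¹·(δG·G⁻¹)·E·S₂⁻¹`. -/
lemma key (f₁ f₂ fg : ℝ → Matrix (Fin r) (Fin r) ℂ) (t : ℝ)
    (E E' D : Matrix (Fin r) (Fin r) ℂ)
    (h1 : Dif f₁ t) (h2 : Dif f₂ t) (hg : Dif fg t)
    (hu1 : ∀ᶠ s in nhds t, IsUnit (f₁ s)) (hu2 : ∀ᶠ s in nhds t, IsUnit (f₂ s))
    (hug : ∀ᶠ s in nhds t, IsUnit (fg s))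
    (hE : E * E' = 1) (hE' : E' * E = 1)
    (hrel : ∀ᶠ s in nhds t, E * ((f₂ s)⁻¹ * ((f₁ s)⁻¹ * fg s)) = fg s * D) :
    md (fun s => (f₁ s)⁻¹ * fg s) t * ((fg t)⁻¹ * f₁ t)
      = md f₂ t * (f₂ t)⁻¹
        + f₂ t * (E' * (md fg t * (fg t)⁻¹ * (E * (f₂ t)⁻¹))) := by
  have hu1t : IsUnit (f₁ t) := hu1.self_of_nhds
  have hu2t : IsUnit (f₂ t) := hu2.self_of_nhds
  have hugt : IsUnit (fg t) := hug.self_of_nhds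
  have haa : f₁ t * (f₁ t)⁻¹ = 1 :=
    Matrix.mul_nonsing_inv _ ((Matrix.isUnit_iff_isUnit_det _).mp hu1t)
  have haa' : (f₁ t)⁻¹ * f₁ t = 1 :=
    Matrix.nonsing_inv_mul _ ((Matrix.isUnit_iff_isUnit_det _).mp hu1t)
  have hbb : f₂ t * (f₂ t)⁻¹ = 1 :=
    Matrix.mul_nonsing_inv _ ((Matrix.isUnit_iff_isUnit_det _).mp hu2t)
  have hbb' : (f₂ t)⁻¹ * f₂ t = 1 :=
    Matrix.nonsing_inv_mul _ ((Matrix.isUnit_iff_isUnit_det _).mp hu2t)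
  have hgg : fg t * (fg t)⁻¹ = 1 :=
    Matrix.mul_nonsing_inv _ ((Matrix.isUnit_iff_isUnit_det _).mp hugt)
  have hgg' : (fg t)⁻¹ * fg t = 1 :=
    Matrix.nonsing_inv_mul _ ((Matrix.isUnit_iff_isUnit_det _).mp hugt)
  have d1i : Dif (fun s => (f₁ s)⁻¹) t := h1.inv hu1t
  have d2i : Dif (fun s => (f₂ s)⁻¹) t := h2.inv hu2t
  have dP : Dif (fun s => (f₁ s)⁻¹ * fg s) t := d1i.mul hg
  -- differentiate the relation
  have hF : md (fun s => E * ((f₂ s)⁻¹ * ((f₁ s)⁻¹ * fg s))) t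
      = md (fun s => fg s * D) t := md_congr hrel
  have hL : md (fun s => E * ((f₂ s)⁻¹ * ((f₁ s)⁻¹ * fg s))) t
      = E * (md (fun s => (f₂ s)⁻¹) t * ((f₁ t)⁻¹ * fg t)
          + (f₂ t)⁻¹ * md (fun s => (f₁ s)⁻¹ * fg s) t) := by
    rw [md_mul (Dif.const E t) (d2i.mul dP), md_const, zero_mul, zero_add,
      md_mul d2i dP]
  have hR : md (fun s => fg s * D) t = md fg t * D := by
    rw [md_mul hg (Dif.const D t), md_const, mul_zero, add_zero]
  have hdiff : E * (md (fun s => (f₂ s)⁻¹) t * ((f₁ t)⁻¹ * fg t)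
      + (f₂ t)⁻¹ * md (fun s => (f₁ s)⁻¹ * fg s) t) = md fg t * D := by
    rw [← hL, hF, hR]
  have hq : md (fun s => (f₂ s)⁻¹) t = -((f₂ t)⁻¹ * (md f₂ t * (f₂ t)⁻¹)) :=
    md_inv h2 hu2
  have hrelt : E * ((f₂ t)⁻¹ * ((f₁ t)⁻¹ * fg t)) = fg t * D := hrel.self_of_nhds
  have := alg (f₁ t) ((f₁ t)⁻¹) (f₂ t) ((f₂ t)⁻¹) (fg t) ((fg t)⁻¹) E E' D
    (md fg t) (md f₂ t) (md (fun s => (f₂ s)⁻¹) t) (md (fun s => (f₁ s)⁻¹ * fg s) t)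
    haa haa' hbb hbb' hgg hgg' hE hE' hq hdiff hrelt
  rw [this]

end Stmt14Aux


/-- The computation (b4)–(b6) of the paper: for Stokes matrices `S₁, S₂`, transition
matrix `G` and fixed diagonal exponents `K₀, K_∞` satisfying the monodromy relation
`G⁻¹ e^{2πiK₀} S₂⁻¹ S₁⁻¹ G = e^{−2πiK_∞}`, one has
`Tr(δS₁·S₁⁻¹ ∧ δG·G⁻¹) + Tr(δS₂·S₂⁻¹ ∧ δ(S₁⁻¹G)·G⁻¹S₁)
  = Tr((δS₁·S₁⁻¹ + e^{2πiK₀}·S₂⁻¹δS₂·e^{−2πiK₀}) ∧ δG·G⁻¹)`,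
identifying the symplectic structure on the Stokes data with that of the Poisson–Lie
group dual to `GL_r`. -/
theorem stmt_14 (r : ℕ) (hr : 1 ≤ r)
    (U : Set (ℝ × ℝ)) (hU : IsOpen U)
    (S₁ S₂ G : ℝ × ℝ → Matrix (Fin r) (Fin r) ℂ)
    (hS₁ : ∀ i j, DifferentiableOn ℝ (fun u => S₁ u i j) U)
    (hS₂ : ∀ i j, DifferentiableOn ℝ (fun u => S₂ u i j) U)
    (hG : ∀ i j, DifferentiableOn ℝ (fun u => G u i j) U)
    (hS₁u : ∀ u ∈ U, IsUnit (S₁ u)) (hS₂u : ∀ u ∈ U, IsUnit (S₂ u))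
    (hGu : ∀ u ∈ U, IsUnit (G u))
    (k₀ kinf : Fin r → ℂ)
    (hrel : ∀ u ∈ U,
      (G u)⁻¹ *
        Matrix.diagonal (fun i => Complex.exp (2 * Real.pi * Complex.I * k₀ i)) *
        (S₂ u)⁻¹ * (S₁ u)⁻¹ * G u
      = Matrix.diagonal (fun i => Complex.exp (-(2 * Real.pi * Complex.I) * kinf i))) :
    ∀ u ∈ U,
      wedgeTr
        (mpd1 S₁ u * (S₁ u)⁻¹) (mpd2 S₁ u * (S₁ u)⁻¹)
        (mpd1 G u * (G u)⁻¹) (mpd2 G u * (G u)⁻¹)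
      + wedgeTr
          (mpd1 S₂ u * (S₂ u)⁻¹) (mpd2 S₂ u * (S₂ u)⁻¹)
          (mpd1 (fun v => (S₁ v)⁻¹ * G v) u * ((G u)⁻¹ * S₁ u))
          (mpd2 (fun v => (S₁ v)⁻¹ * G v) u * ((G u)⁻¹ * S₁ u))
      =
      wedgeTr
        (mpd1 S₁ u * (S₁ u)⁻¹ +
          Matrix.diagonal (fun i => Complex.exp (2 * Real.pi * Complex.I * k₀ i)) *
            ((S₂ u)⁻¹ * mpd1 S₂ u) *
            Matrix.diagonal (fun i => Complex.exp (-(2 * Real.pi * Complex.I) * k₀ i)))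
        (mpd2 S₁ u * (S₁ u)⁻¹ +
          Matrix.diagonal (fun i => Complex.exp (2 * Real.pi * Complex.I * k₀ i)) *
            ((S₂ u)⁻¹ * mpd2 S₂ u) *
            Matrix.diagonal (fun i => Complex.exp (-(2 * Real.pi * Complex.I) * k₀ i)))
        (mpd1 G u * (G u)⁻¹) (mpd2 G u * (G u)⁻¹) := by
  intro u hu
  open Stmt14Aux in
  set E : Matrix (Fin r) (Fin r) ℂ :=
    Matrix.diagonal (fun i => Complex.exp (2 * Real.pi * Complex.I * k₀ i)) with hEdef
  set E' : Matrix (Fin r) (Fin r) ℂ :=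
    Matrix.diagonal (fun i => Complex.exp (-(2 * Real.pi * Complex.I) * k₀ i)) with hE'def
  set D : Matrix (Fin r) (Fin r) ℂ :=
    Matrix.diagonal (fun i => Complex.exp (-(2 * Real.pi * Complex.I) * kinf i)) with hDdef
  have hE : E * E' = 1 := by
    rw [hEdef, hE'def, Matrix.diagonal_mul_diagonal]
    have : (fun i => Complex.exp (2 * Real.pi * Complex.I * k₀ i) *
        Complex.exp (-(2 * Real.pi * Complex.I) * k₀ i)) = fun _ => (1 : ℂ) := by
      funext i
      rw [← Complex.exp_add,
        show 2 * Real.pi * Complex.I * k₀ i + -(2 * Real.pi * Complex.I) * k₀ i = 0 by ring,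
        Complex.exp_zero]
    rw [this, Matrix.diagonal_one]
  have hE' : E' * E = 1 := by
    rw [hEdef, hE'def, Matrix.diagonal_mul_diagonal]
    have : (fun i => Complex.exp (-(2 * Real.pi * Complex.I) * k₀ i) *
        Complex.exp (2 * Real.pi * Complex.I * k₀ i)) = fun _ => (1 : ℂ) := by
      funext i
      rw [← Complex.exp_add,
        show -(2 * Real.pi * Complex.I) * k₀ i + 2 * Real.pi * Complex.I * k₀ i = 0 by ring,
        Complex.exp_zero]
    rw [this, Matrix.diagonal_one]
  -- rearranged monodromy relation
  have hrel2 : ∀ v ∈ U, E * ((S₂ v)⁻¹ * ((S₁ v)⁻¹ * G v)) = G v * D := by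
    intro v hv
    have hgv : G v * (G v)⁻¹ = 1 :=
      Matrix.mul_nonsing_inv _ ((Matrix.isUnit_iff_isUnit_det _).mp (hGu v hv))
    have h := congrArg (fun M => G v * M) (hrel v hv)
    rw [show G v * ((G v)⁻¹ * E * (S₂ v)⁻¹ * (S₁ v)⁻¹ * G v)
        = (G v * (G v)⁻¹) * (E * ((S₂ v)⁻¹ * ((S₁ v)⁻¹ * G v))) by
      simp only [Matrix.mul_assoc], hgv, one_mul] at h
    exact h
  -- facts about S₂ u, G u at u
  have hu2t : IsUnit (S₂ u) := hS₂u u hu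
  have hbb : S₂ u * (S₂ u)⁻¹ = 1 :=
    Matrix.mul_nonsing_inv _ ((Matrix.isUnit_iff_isUnit_det _).mp hu2t)
  have hbb' : (S₂ u)⁻¹ * S₂ u = 1 :=
    Matrix.nonsing_inv_mul _ ((Matrix.isUnit_iff_isUnit_det _).mp hu2t)
  -- first coordinate line
  have hline1 : ∀ᶠ s in nhds u.1, (s, u.2) ∈ U := by
    have hc : ContinuousAt (fun s : ℝ => (s, u.2)) u.1 :=
      (continuous_id.prodMk continuous_const).continuousAt
    have := hU.eventually_mem hu
    exact hc.eventually this
  have hline2 : ∀ᶠ s in nhds u.2, (u.1, s) ∈ U := by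
    have hc : ContinuousAt (fun s : ℝ => (u.1, s)) u.2 :=
      (continuous_const.prodMk continuous_id).continuousAt
    exact hc.eventually (hU.eventually_mem hu)
  have dif1 : ∀ (X : ℝ × ℝ → Matrix (Fin r) (Fin r) ℂ),
      (∀ i j, DifferentiableOn ℝ (fun v => X v i j) U) →
      Dif (fun s => X (s, u.2)) u.1 := by
    intro X hX i j
    have h := (hX i j).differentiableAt (hU.mem_nhds hu)
    exact h.comp u.1 (differentiableAt_id.prodMk (differentiableAt_const _) :
      DifferentiableAt ℝ (fun s : ℝ => (s, u.2)) u.1)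
  have dif2 : ∀ (X : ℝ × ℝ → Matrix (Fin r) (Fin r) ℂ),
      (∀ i j, DifferentiableOn ℝ (fun v => X v i j) U) →
      Dif (fun s => X (u.1, s)) u.2 := by
    intro X hX i j
    have h := (hX i j).differentiableAt (hU.mem_nhds hu)
    exact h.comp u.2 ((differentiableAt_const _).prodMk differentiableAt_id :
      DifferentiableAt ℝ (fun s : ℝ => (u.1, s)) u.2)
  -- key identities, for each direction
  have hX1 : mpd1 (fun v => (S₁ v)⁻¹ * G v) u * ((G u)⁻¹ * S₁ u)
      = mpd1 S₂ u * (S₂ u)⁻¹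
        + S₂ u * (E' * (mpd1 G u * (G u)⁻¹ * (E * (S₂ u)⁻¹))) := by
    exact key (fun s => S₁ (s, u.2)) (fun s => S₂ (s, u.2)) (fun s => G (s, u.2)) u.1
      E E' D (dif1 S₁ hS₁) (dif1 S₂ hS₂) (dif1 G hG)
      (hline1.mono fun s hs => hS₁u _ hs) (hline1.mono fun s hs => hS₂u _ hs)
      (hline1.mono fun s hs => hGu _ hs) hE hE'
      (hline1.mono fun s hs => hrel2 _ hs)
  have hX2 : mpd2 (fun v => (S₁ v)⁻¹ * G v) u * ((G u)⁻¹ * S₁ u)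
      = mpd2 S₂ u * (S₂ u)⁻¹
        + S₂ u * (E' * (mpd2 G u * (G u)⁻¹ * (E * (S₂ u)⁻¹))) := by
    exact key (fun s => S₁ (u.1, s)) (fun s => S₂ (u.1, s)) (fun s => G (u.1, s)) u.2
      E E' D (dif2 S₁ hS₁) (dif2 S₂ hS₂) (dif2 G hG)
      (hline2.mono fun s hs => hS₁u _ hs) (hline2.mono fun s hs => hS₂u _ hs)
      (hline2.mono fun s hs => hGu _ hs) hE hE'
      (hline2.mono fun s hs => hrel2 _ hs)
  rw [show mpd1 S₂ u * (S₂ u)⁻¹ = mpd1 S₂ u * (S₂ u)⁻¹ from rfl]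
  simp only [wedgeTr]
  rw [hX1, hX2]
  have htr := tr_key (S₂ u) ((S₂ u)⁻¹) E E' (mpd1 S₂ u) (mpd2 S₂ u)
    (mpd1 G u * (G u)⁻¹) (mpd2 G u * (G u)⁻¹) hbb hbb'
  rw [htr]
  simp only [add_mul, Matrix.trace_sub, Matrix.trace_add]
  ring
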